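/- Let X be a complete CAT(0) metric space and c : X → ℝ a convex function (convex along geodesics). If every sublevel set {x ∈ X : c(x) ≤ u}, u ∈ ℝ, is bounded, then c attains its minimum on X. -/
import Mathlib

/-- A geodesic from `x` to `y`, parametrized proportionally to arc length on `[0,1]`. -/
def IsGeodesic {X : Type*} [MetricSpace X] (γ : ℝ → X) (x y : X) : Prop :=
  γ 0 = x ∧ γ 1 = y ∧
    ∀ s ∈ Set.Icc (0 : ℝ) 1, ∀ t ∈ Set.Icc (0 : ℝ) 1,
      dist (γ s) (γ t) = |s - t| * dist x y

/-- A geodesic metric space: any two points are joined by a geodesic. -/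
def GeodesicMetricSpace (X : Type*) [MetricSpace X] : Prop :=
  ∀ x y : X, ∃ γ : ℝ → X, IsGeodesic γ x y

/-- The CAT(0) comparison inequality along geodesics. -/
def IsCAT0 (X : Type*) [MetricSpace X] : Prop :=
  ∀ x y : X, ∀ γ : ℝ → X, IsGeodesic γ x y → ∀ t ∈ Set.Icc (0 : ℝ) 1, ∀ z : X,
    dist z (γ t) ^ 2 ≤
      (1 - t) * dist z x ^ 2 + t * dist z y ^ 2 - t * (1 - t) * dist x y ^ 2

/-- Convexity of a function along every geodesic. -/
def ConvexAlongGeodesics {X : Type*} [MetricSpace X] (c : X → ℝ) : Prop :=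
  ∀ x y : X, ∀ γ : ℝ → X, IsGeodesic γ x y →
    ∀ t ∈ Set.Icc (0 : ℝ) 1, c (γ t) ≤ (1 - t) * c x + t * c y

/-- Key lemma: nested nonempty sublevel sets have a common point. -/
lemma key_lemma {X : Type*} [MetricSpace X] [CompleteSpace X] [Nonempty X]
    (hgeo : GeodesicMetricSpace X) (hcat : IsCAT0 X)
    (c : X → ℝ) (hconv : ConvexAlongGeodesics c) (hlsc : LowerSemicontinuous c)
    (hbdd : ∀ u : ℝ, Bornology.IsBounded {x : X | c x ≤ u})
    (v : ℕ → ℝ) (hv : Antitone v) (hne : ∀ n, ∃ x, c x ≤ v n) :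
    ∃ x : X, ∀ n, c x ≤ v n := by
  classical
  obtain ⟨z⟩ := ‹Nonempty X›
  set C : ℕ → Set X := fun n => {x | c x ≤ v n} with hC
  have hCne : ∀ n, (C n).Nonempty := fun n => hne n
  have hCsub : ∀ {n m}, n ≤ m → C m ⊆ C n := by
    intro n m hnm x hx
    exact le_trans hx (hv hnm)
  have hCclosed : ∀ n, IsClosed (C n) := fun n => hlsc.isClosed_preimage (v n)
  set r : ℕ → ℝ := fun n => Metric.infDist z (C n) with hr
  have hrmono : Monotone r := fun n m hnm =>
    Metric.infDist_le_infDist_of_subset (hCsub hnm) (hCne m)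
  -- r is bounded above
  obtain ⟨R, hR⟩ := (hbdd (v 0)).subset_closedBall z
  have hrbdd : ∀ n, r n ≤ R := by
    intro n
    obtain ⟨w, hw⟩ := hCne n
    have h1 : r n ≤ dist z w := Metric.infDist_le_dist_of_mem hw
    have h2 : w ∈ Metric.closedBall z R := hR (hCsub (Nat.zero_le n) hw)
    rw [Metric.mem_closedBall] at h2
    exact h1.trans (by rwa [dist_comm])
  -- approximating sequence
  set ε : ℕ → ℝ := fun n => 1 / ((n : ℝ) + 1) with hε
  have hεpos : ∀ n, 0 < ε n := fun n => by positivity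
  have hεanti : Antitone ε := by
    intro a b hab
    have h1 : ((a : ℝ) + 1) ≤ (b : ℝ) + 1 := by exact_mod_cast Nat.succ_le_succ hab
    exact one_div_le_one_div_of_le (by positivity) h1
  have hx : ∀ n, ∃ x, x ∈ C n ∧ dist z x < r n + ε n := by
    intro n
    have h0 : Metric.infDist z (C n) < r n + ε n := by
      have := hεpos n; simp only [hr]; linarith
    obtain ⟨y, hy, hdy⟩ := (Metric.infDist_lt_iff (hCne n)).mp h0
    exact ⟨y, hy, hdy⟩
  choose x hxC hxd using hx
  have hrange : BddAbove (Set.range r) := ⟨R, by rintro _ ⟨n, rfl⟩; exact hrbdd n⟩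
  set rr : ℝ := ⨆ n, r n with hrr
  have hrle : ∀ n, r n ≤ rr := fun n => le_ciSup hrange n
  have htend : Filter.Tendsto r Filter.atTop (nhds rr) :=
    tendsto_atTop_ciSup hrmono hrange
  have hrnonneg : ∀ n, 0 ≤ r n := fun n => Metric.infDist_nonneg
  -- the quantitative estimate
  set f : ℕ → ℝ := fun n => 2 * (r n + ε n) ^ 2 + 2 * (rr + ε n) ^ 2 - 4 * r n ^ 2 with hf
  have hmain : ∀ n m, n ≤ m → dist (x n) (x m) ^ 2 ≤ f n := by
    intro n m hnm
    obtain ⟨γ, hγ⟩ := hgeo (x n) (x m)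
    have hhalf : (1 / 2 : ℝ) ∈ Set.Icc (0 : ℝ) 1 := by norm_num
    set p := γ (1 / 2) with hp
    have hpC : p ∈ C n := by
      have h1 := hconv (x n) (x m) γ hγ (1 / 2) hhalf
      have h2 : c (x m) ≤ v n := le_trans (hxC m) (hv hnm)
      have h3 : c (x n) ≤ v n := hxC n
      show c p ≤ v n
      calc c p ≤ (1 - 1 / 2) * c (x n) + 1 / 2 * c (x m) := h1
        _ ≤ v n := by linarith
    have hA : r n ≤ dist z p := Metric.infDist_le_dist_of_mem hpC
    have hA2 : r n ^ 2 ≤ dist z p ^ 2 := pow_le_pow_left₀ (hrnonneg n) hA 2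
    have hB := hcat (x n) (x m) γ hγ (1 / 2) hhalf z
    have hC : dist z (x n) ^ 2 ≤ (r n + ε n) ^ 2 :=
      pow_le_pow_left₀ dist_nonneg (hxd n).le 2
    have hD : dist z (x m) ≤ rr + ε n :=
      (hxd m).le.trans (add_le_add (hrle m) (hεanti hnm))
    have hD2 : dist z (x m) ^ 2 ≤ (rr + ε n) ^ 2 :=
      pow_le_pow_left₀ dist_nonneg hD 2
    rw [← hp] at hB
    simp only [hf]
    nlinarith [hB, hA2, hC, hD2]
  -- f tends to 0
  have hε0 : Filter.Tendsto ε Filter.atTop (nhds 0) :=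
    tendsto_one_div_add_atTop_nhds_zero_nat
  have hftend : Filter.Tendsto f Filter.atTop (nhds 0) := by
    have h1 : Filter.Tendsto f Filter.atTop
        (nhds (2 * (rr + 0) ^ 2 + 2 * (rr + 0) ^ 2 - 4 * rr ^ 2)) := by
      exact (((htend.add hε0).pow 2).const_mul 2).add
        ((((tendsto_const_nhds (x := rr)).add hε0).pow 2).const_mul 2) |>.sub
        ((htend.pow 2).const_mul 4)
    have h2 : 2 * (rr + 0) ^ 2 + 2 * (rr + 0) ^ 2 - 4 * rr ^ 2 = 0 := by ring
    rwa [h2] at h1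
  -- Cauchy
  have hcauchy : CauchySeq x := by
    rw [Metric.cauchySeq_iff]
    intro δ hδ
    have hδ2 : (0 : ℝ) < δ ^ 2 := by positivity
    obtain ⟨N, hN⟩ := (Filter.tendsto_atTop'.mp hftend) (Set.Iio (δ ^ 2))
      (Iio_mem_nhds hδ2)
    refine ⟨N, fun a ha b hb => ?_⟩
    have key : ∀ i j, N ≤ i → i ≤ j → dist (x i) (x j) < δ := by
      intro i j hi hij
      have h1 : dist (x i) (x j) ^ 2 ≤ f i := hmain i j hij
      have h2 : f i < δ ^ 2 := hN i hi
      exact lt_of_pow_lt_pow_left₀ 2 hδ.le (lt_of_le_of_lt h1 h2)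
    rcases le_total a b with h | h
    · exact key a b ha h
    · rw [dist_comm]; exact key b a hb h
  obtain ⟨xlim, hlim⟩ := cauchySeq_tendsto_of_complete hcauchy
  refine ⟨xlim, fun n => ?_⟩
  have : xlim ∈ C n := by
    refine (hCclosed n).mem_of_tendsto hlim ?_
    exact Filter.eventually_atTop.2 ⟨n, fun m hm => hCsub hm (hxC m)⟩
  exact this

theorem stmt5 {X : Type*} [MetricSpace X] [CompleteSpace X] [Nonempty X]
    (hgeo : GeodesicMetricSpace X) (hcat : IsCAT0 X)
    (c : X → ℝ) (hconv : ConvexAlongGeodesics c) (hlsc : LowerSemicontinuous c)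
    (hbdd : ∀ u : ℝ, Bornology.IsBounded {x : X | c x ≤ u}) :
    ∃ x₀ : X, ∀ x : X, c x₀ ≤ c x := by
  by_cases hB : BddBelow (Set.range c)
  · set m := sInf (Set.range c) with hm
    have hrne : (Set.range c).Nonempty := Set.range_nonempty c
    set v : ℕ → ℝ := fun n => m + 1 / ((n : ℝ) + 1) with hv
    have hva : Antitone v := by
      intro a b hab
      have h1 : ((a : ℝ) + 1) ≤ (b : ℝ) + 1 := by exact_mod_cast Nat.succ_le_succ hab
      have h2 := one_div_le_one_div_of_le (show (0:ℝ) < (a:ℝ)+1 by positivity) h1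
      simpa [hv] using add_le_add_left h2 m
    have hvne : ∀ n, ∃ x, c x ≤ v n := by
      intro n
      have hlt : m < m + 1 / ((n : ℝ) + 1) := by
        have : (0:ℝ) < 1 / ((n : ℝ) + 1) := by positivity
        linarith
      obtain ⟨a, ⟨y, rfl⟩, hay⟩ := exists_lt_of_csInf_lt hrne hlt
      exact ⟨y, hay.le⟩
    obtain ⟨x₀, hx₀⟩ := key_lemma hgeo hcat c hconv hlsc hbdd v hva hvne
    refine ⟨x₀, fun y => ?_⟩
    have h1 : c x₀ ≤ m := by
      have ht : Filter.Tendsto v Filter.atTop (nhds (m + 0)) :=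
        tendsto_const_nhds.add tendsto_one_div_add_atTop_nhds_zero_nat
      have := ge_of_tendsto ht (Filter.Eventually.of_forall hx₀)
      simpa using this
    exact h1.trans (csInf_le hB ⟨y, rfl⟩)
  · exfalso
    set v : ℕ → ℝ := fun n => -(n : ℝ) with hv
    have hva : Antitone v := fun a b hab => neg_le_neg (by exact_mod_cast hab)
    have hvne : ∀ n, ∃ x, c x ≤ v n := by
      intro n
      obtain ⟨a, ⟨y, rfl⟩, hay⟩ := not_bddBelow_iff.mp hB (-(n : ℝ))
      exact ⟨y, hay.le⟩
    obtain ⟨x₀, hx₀⟩ := key_lemma hgeo hcat c hconv hlsc hbdd v hva hvne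
    obtain ⟨n, hn⟩ := exists_nat_gt (-(c x₀))
    have := hx₀ n
    simp only [hv] at this
    linarith
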